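/- The orbit closure of the Thue–Morse sequence under the shift map is uncountable: the set closure {σ^[k] t | k : ℕ} ⊆ (ℕ → Bool) is not countable. -/

import Mathlib

/-- The Thue–Morse sequence: `t n = true` iff the number of 1s in the
binary expansion of `n` is odd. -/
def thueMorse (n : ℕ) : Bool := (Nat.digits 2 n).count 1 % 2 == 1

/-- The shift map on the one-sided binary full shift. -/
def shift (x : ℕ → Bool) : ℕ → Bool := fun n => x (n + 1)

lemma tm_even (n : ℕ) : thueMorse (2 * n) = thueMorse n := by
  rcases Nat.eq_zero_or_pos n with rfl | hn
  · rfl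
  · unfold thueMorse
    rw [Nat.digits_def' (by norm_num) (by omega), Nat.mul_mod_right,
      Nat.mul_div_cancel_left _ (by norm_num)]
    simp

lemma tm_odd (n : ℕ) : thueMorse (2 * n + 1) = ! thueMorse n := by
  unfold thueMorse
  rw [Nat.digits_def' (show (1:ℕ) < 2 by norm_num) (by omega)]
  have h1 : (2 * n + 1) % 2 = 1 := by omega
  have h2 : (2 * n + 1) / 2 = n := by omega
  rw [h1, h2, List.count_cons_self]
  rcases Nat.even_or_odd ((Nat.digits 2 n).count 1) with ⟨c, hc⟩ | ⟨c, hc⟩ <;>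
      rw [hc] <;>
    · have e1 : (c + c + 1) % 2 = 1 := by omega
      have e2 : (c + c) % 2 = 0 := by omega
      have e3 : (2 * c + 1 + 1) % 2 = 0 := by omega
      have e4 : (2 * c + 1) % 2 = 1 := by omega
      simp [e1, e2, e3, e4]

lemma tm_flip : ∀ m n : ℕ, n < 2 ^ m → thueMorse (n + 2 ^ m) = ! thueMorse n := by
  intro m
  induction m with
  | zero =>
    intro n hn
    interval_cases n
    rw [show (0:ℕ) + 2 ^ 0 = 2 * 0 + 1 from rfl, tm_odd]
  | succ m ih =>
    intro n hn
    rcases Nat.even_or_odd n with ⟨a, ha⟩ | ⟨a, ha⟩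
    · have ha2 : n = 2 * a := by omega
      have h : n + 2 ^ (m + 1) = 2 * (a + 2 ^ m) := by rw [ha2]; ring
      rw [h, tm_even, ih a (by omega), ha2, tm_even]
    · have h : n + 2 ^ (m + 1) = 2 * (a + 2 ^ m) + 1 := by rw [ha]; ring
      rw [h, tm_odd, ih a (by omega), ha, tm_odd]

lemma tm_rec (m n : ℕ) (hn : n < 2 ^ m) : thueMorse (n + 3 * 2 ^ m) = thueMorse n := by
  have h : n + 3 * 2 ^ m = (n + 2 ^ m) + 2 ^ (m + 1) := by ring
  rw [h, tm_flip (m + 1) _ (by rw [pow_succ]; omega), tm_flip m n hn, Bool.not_not]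

lemma tm_pairs (a : ℕ) :
    thueMorse (4 * a) = thueMorse a ∧ thueMorse (4 * a + 1) = ! thueMorse a ∧
    thueMorse (4 * a + 2) = ! thueMorse a ∧ thueMorse (4 * a + 3) = thueMorse a := by
  have h0 : 4 * a = 2 * (2 * a) := by ring
  have h1 : 4 * a + 1 = 2 * (2 * a) + 1 := by ring
  have h2 : 4 * a + 2 = 2 * (2 * a + 1) := by ring
  have h3 : 4 * a + 3 = 2 * (2 * a + 1) + 1 := by ring
  refine ⟨?_, ?_, ?_, ?_⟩
  · rw [h0, tm_even, tm_even]
  · rw [h1, tm_odd, tm_even]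
  · rw [h2, tm_even, tm_odd]
  · rw [h3, tm_odd, tm_odd, Bool.not_not]

/-- Thue–Morse is not eventually periodic. -/
lemma tm_not_periodic : ∀ p : ℕ, 0 < p → ∀ N : ℕ, ∃ n ≥ N, thueMorse (n + p) ≠ thueMorse n := by
  intro p
  induction p using Nat.strong_induction_on with
  | _ p ih =>
    intro hp N
    by_contra hcon
    push_neg at hcon
    rcases Nat.even_or_odd p with ⟨q, hq⟩ | hodd
    · -- even case: reduce to q
      have hq' : 0 < q := by omega
      obtain ⟨n, hn, hne⟩ := ih q (by omega) hq' N
      apply hne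
      have h1 := hcon (2 * n) (by omega)
      rw [show 2 * n + p = 2 * (n + q) by omega, tm_even, tm_even] at h1
      exact h1
    · -- odd case
      set a := N with ha
      set n := 4 * a + 1 with hn
      have hpair := tm_pairs a
      have heq : thueMorse n = thueMorse (n + 1) := by
        rw [hn, show 4 * a + 1 + 1 = 4 * a + 2 by ring, hpair.2.1, hpair.2.2.1]
      have h1 := hcon n (by omega)
      have h2 := hcon (n + 1) (by omega)
      have heq2 : thueMorse (n + p) = thueMorse (n + p + 1) := by
        rw [h1, show n + p + 1 = n + 1 + p by ring, h2, heq]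
      obtain ⟨c, hc⟩ := hodd
      rcases Nat.even_or_odd c with ⟨d, hd⟩ | ⟨d, hd⟩
      · have : n + p = 4 * (a + d) + 2 := by omega
        rw [this, show 4 * (a + d) + 2 + 1 = 4 * (a + d) + 3 by ring,
          (tm_pairs (a + d)).2.2.1, (tm_pairs (a + d)).2.2.2] at heq2
        simp at heq2
      · have : n + p = 4 * (a + d + 1) := by omega
        rw [this, (tm_pairs (a + d + 1)).1, (tm_pairs (a + d + 1)).2.1] at heq2
        simp at heq2

lemma shift_iterate (k : ℕ) (x : ℕ → Bool) (n : ℕ) : (shift^[k] x) n = x (n + k) := by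
  induction k generalizing n with
  | zero => rfl
  | succ k ih =>
    rw [Function.iterate_succ_apply']
    show (shift^[k] x) (n + 1) = x (n + (k + 1))
    rw [ih]
    congr 1
    omega

lemma orbit_inj : Function.Injective (fun k => shift^[k] thueMorse) := by
  intro j k hjk
  simp only at hjk
  by_contra hne
  wlog h : j < k generalizing j k
  · exact this hjk.symm (Ne.symm hne) (by omega)
  obtain ⟨n, hn, hne'⟩ := tm_not_periodic (k - j) (by omega) j
  apply hne'
  have := congrFun hjk (n - j)
  rw [shift_iterate, shift_iterate, show n - j + j = n by omega,
    show n - j + k = n + (k - j) by omega] at this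
  exact this.symm

/-- The orbit closure of the Thue–Morse sequence under the shift map is
uncountable. -/
theorem thueMorse_orbitClosure_uncountable :
    ¬ (closure {x : ℕ → Bool | ∃ k : ℕ, shift^[k] thueMorse = x}).Countable := by
  set S : Set (ℕ → Bool) := {x : ℕ → Bool | ∃ k : ℕ, shift^[k] thueMorse = x} with hS
  have hpre : Preperfect S := by
    rintro x ⟨k, rfl⟩
    rw [accPt_iff_nhds]
    intro U hU
    have htend : Filter.Tendsto (fun m => shift^[k + 3 * 2 ^ m] thueMorse)
        Filter.atTop (nhds (shift^[k] thueMorse)) := by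
      rw [tendsto_pi_nhds]
      intro n
      apply Filter.Tendsto.congr' (f₁ := fun _ => (shift^[k] thueMorse) n)
      · filter_upwards [Filter.eventually_ge_atTop (n + k + 1)] with m hm
        rw [shift_iterate, shift_iterate, show n + (k + 3 * 2 ^ m) = (n + k) + 3 * 2 ^ m by ring]
        exact (tm_rec m (n + k) (by calc n + k < n + k + 1 := by omega
          _ ≤ m := hm
          _ < 2 ^ m := Nat.lt_two_pow_self)).symm
      · exact tendsto_const_nhds
    obtain ⟨m, hm⟩ := (htend.eventually_mem hU).exists
    refine ⟨shift^[k + 3 * 2 ^ m] thueMorse, ⟨hm, ⟨_, rfl⟩⟩, ?_⟩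
    intro hcontra
    have := orbit_inj hcontra
    have hpos : 0 < 3 * 2 ^ m := by positivity
    omega
  have hperf : Perfect (closure S) := hpre.perfect_closure
  have hne : (closure S).Nonempty := ⟨thueMorse, subset_closure ⟨0, rfl⟩⟩
  intro hcount
  letI := TopologicalSpace.upgradeIsCompletelyMetrizable (ℕ → Bool)
  obtain ⟨f, hrange, hcont, hinj⟩ := hperf.exists_nat_bool_injection hne
  have hcr : (Set.range f).Countable := hcount.mono hrange
  have huniv : (Set.univ : Set (ℕ → Bool)).Countable := by
    have := hcr.preimage hinj
    simpa using this
  have : Uncountable (ℕ → Bool) := by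
    rw [← Cardinal.aleph0_lt_mk_iff, Cardinal.mk_arrow, Cardinal.mk_bool, Cardinal.mk_nat,
      Cardinal.lift_aleph0]
    simpa using Cardinal.cantor Cardinal.aleph0
  exact Set.not_countable_univ huniv
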